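/- arXiv:2401.11683 — 2 statements merged into one kernel-verified Lean document; each statement's English description precedes it below -/
import Mathlib

section
/- Let 1 ≤ N ≤ 3, γ > 0 with γ ≠ 3, c ∈ ℝ^N and ω > max{|c|²/4, γ|c|²/12}. If (u, v) ∈ H¹(ℝ^N)×H¹(ℝ^N) satisfies Ñ_{ω,c}(u, v) < 0, then (1/2)Q̃_{ω,c}(u, v) > μ̃_{ω,c}. -/
open MeasureTheory Complex Filter
open scoped RealInnerProductSpace

noncomputable section

abbrev Vec (N : ℕ) := EuclideanSpace ℝ (Fin N)
abbrev Fn (N : ℕ) := Vec N → ℂ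
abbrev FnR (N : ℕ) := Vec N → ℝ

/-- Partial derivative in the `i`-th coordinate direction. -/
def pd {N : ℕ} (i : Fin N) (u : Fn N) (x : Vec N) : ℂ :=
  fderiv ℝ u x (EuclideanSpace.single i 1)

def pdR {N : ℕ} (i : Fin N) (u : FnR N) (x : Vec N) : ℝ :=
  fderiv ℝ u x (EuclideanSpace.single i 1)

/-- Laplacian. -/
def lap {N : ℕ} (u : Fn N) (x : Vec N) : ℂ := ∑ i, pd i (fun y => pd i u y) x

def lapR {N : ℕ} (u : FnR N) (x : Vec N) : ℝ := ∑ i, pdR i (fun y => pdR i u y) x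

/-- `c · ∇u`. -/
def cgrad {N : ℕ} (c : Vec N) (u : Fn N) (x : Vec N) : ℂ := ∑ i, (c i : ℂ) * pd i u x

/-- Membership in `H¹(ℝ^N; ℂ)`. -/
def MemH1 {N : ℕ} (u : Fn N) : Prop :=
  MemLp u 2 (volume : Measure (Vec N)) ∧
    MemLp (fun x => fderiv ℝ u x) 2 (volume : Measure (Vec N))

def MemH1R {N : ℕ} (u : FnR N) : Prop :=
  MemLp u 2 (volume : Measure (Vec N)) ∧
    MemLp (fun x => fderiv ℝ u x) 2 (volume : Measure (Vec N))

def L2sq {N : ℕ} (u : Fn N) : ℝ := ∫ x : Vec N, ‖u x‖ ^ 2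
def L2sqR {N : ℕ} (u : FnR N) : ℝ := ∫ x : Vec N, (u x) ^ 2
def gradSq {N : ℕ} (u : Fn N) : ℝ := ∫ x : Vec N, ∑ i, ‖pd i u x‖ ^ 2
def gradSqR {N : ℕ} (u : FnR N) : ℝ := ∫ x : Vec N, ∑ i, (pdR i u x) ^ 2

/-- `(f, g) = Re ∫ f ḡ`. -/
def reInner {N : ℕ} (f g : Fn N) : ℝ := ∫ x : Vec N, (f x * (starRingEnd ℂ) (g x)).re

/-- The functional `D(u,v)`. -/
def Dfun {N : ℕ} (u v : Fn N) : ℝ :=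
  ∫ x : Vec N, ((1 : ℝ)/36) * ‖u x‖ ^ 4 + (9/4) * ‖v x‖ ^ 4 + ‖u x‖ ^ 2 * ‖v x‖ ^ 2
    + (1/9) * (((starRingEnd ℂ) (u x)) ^ 3 * v x).re

/-- `c · P(u,v)` where `P` is the momentum. -/
def cdotP {N : ℕ} (γ : ℝ) (c : Vec N) (u v : Fn N) : ℝ :=
  ∑ i, c i * ((∫ x : Vec N, (Complex.I * pd i u x * (starRingEnd ℂ) (u x)).re)
    + γ * (∫ x : Vec N, (Complex.I * pd i v x * (starRingEnd ℂ) (v x)).re))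

def Qfun {N : ℕ} (γ ω : ℝ) (c : Vec N) (u v : Fn N) : ℝ :=
  (1/2) * gradSq u + (1/2) * gradSq v + (ω/2) * L2sq u + (3*γ*ω/2) * L2sq v
    + (1/2) * cdotP γ c u v

def Sfun {N : ℕ} (γ ω : ℝ) (c : Vec N) (u v : Fn N) : ℝ := Qfun γ ω c u v - Dfun u v

def Nfun {N : ℕ} (γ ω : ℝ) (c : Vec N) (u v : Fn N) : ℝ :=
  2 * Qfun γ ω c u v - 4 * Dfun u v

/-- `(φ, ψ)` is an (H¹, classical) solution of the stationary system (S). -/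
structure IsSolution {N : ℕ} (γ ω : ℝ) (c : Vec N) (φ ψ : Fn N) : Prop where
  regφ : ContDiff ℝ 2 φ
  regψ : ContDiff ℝ 2 ψ
  memφ : MemH1 φ
  memψ : MemH1 ψ
  eq1 : ∀ x, -lap φ x + (ω : ℂ) * φ x + Complex.I * cgrad c φ x
      - ((‖φ x‖ ^ 2 / 9 + 2 * ‖ψ x‖ ^ 2 : ℝ) : ℂ) * φ x
      - (1/3) * ((starRingEnd ℂ) (φ x)) ^ 2 * ψ x = 0
  eq2 : ∀ x, -lap ψ x + ((3 * γ * ω : ℝ) : ℂ) * ψ x + Complex.I * (γ : ℂ) * cgrad c ψ x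
      - ((9 * ‖ψ x‖ ^ 2 + 2 * ‖φ x‖ ^ 2 : ℝ) : ℂ) * ψ x - (1/9) * (φ x) ^ 3 = 0

/-- Nonzero solutions of (S). -/
def ASet {N : ℕ} (γ ω : ℝ) (c : Vec N) : Set (Fn N × Fn N) :=
  {p | p ≠ 0 ∧ IsSolution γ ω c p.1 p.2}

/-- Boosted ground states. -/
def GSet {N : ℕ} (γ ω : ℝ) (c : Vec N) : Set (Fn N × Fn N) :=
  {p ∈ ASet γ ω c | ∀ q ∈ ASet γ ω c, Sfun γ ω c p.1 p.2 ≤ Sfun γ ω c q.1 q.2}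

def NehariSet {N : ℕ} (γ ω : ℝ) (c : Vec N) : Set (Fn N × Fn N) :=
  {p | MemH1 p.1 ∧ MemH1 p.2 ∧ p ≠ 0 ∧ Nfun γ ω c p.1 p.2 = 0}

def mu {N : ℕ} (γ ω : ℝ) (c : Vec N) : ℝ :=
  sInf ((fun p : Fn N × Fn N => Sfun γ ω c p.1 p.2) '' NehariSet γ ω c)

def aSet {N : ℕ} (γ ω : ℝ) (c : Vec N) : Set (Fn N × Fn N) :=
  {p ∈ NehariSet γ ω c | Sfun γ ω c p.1 p.2 = mu γ ω c}

/-- Gauged quadratic form `Q̃_{ω,c}`. -/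
def Qt {N : ℕ} (γ ω : ℝ) (c : Vec N) (u v : Fn N) : ℝ :=
  (1/2) * gradSq u + (1/2) * gradSq v + (1/2) * (ω - ‖c‖ ^ 2 / 4) * L2sq u
    + (1/2) * (3*γ*ω - γ ^ 2 * ‖c‖ ^ 2 / 4) * L2sq v

/-- Gauged nonlinear functional `D̃`. -/
def Dt {N : ℕ} (γ : ℝ) (c : Vec N) (u v : Fn N) : ℝ :=
  ∫ x : Vec N, ((1 : ℝ)/36) * ‖u x‖ ^ 4 + (9/4) * ‖v x‖ ^ 4 + ‖u x‖ ^ 2 * ‖v x‖ ^ 2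
    + (1/9) * (Complex.exp (Complex.I * (((3 - γ)/2 * ⟪c, x⟫ : ℝ) : ℂ))
        * ((starRingEnd ℂ) (u x)) ^ 3 * v x).re

def St {N : ℕ} (γ ω : ℝ) (c : Vec N) (u v : Fn N) : ℝ := Qt γ ω c u v - Dt γ c u v

def Nt {N : ℕ} (γ ω : ℝ) (c : Vec N) (u v : Fn N) : ℝ := 2 * Qt γ ω c u v - 4 * Dt γ c u v

def NehariT {N : ℕ} (γ ω : ℝ) (c : Vec N) : Set (Fn N × Fn N) :=
  {p | MemH1 p.1 ∧ MemH1 p.2 ∧ p ≠ 0 ∧ Nt γ ω c p.1 p.2 = 0}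

def muT {N : ℕ} (γ ω : ℝ) (c : Vec N) : ℝ :=
  sInf ((fun p : Fn N × Fn N => St γ ω c p.1 p.2) '' NehariT γ ω c)

def aT {N : ℕ} (γ ω : ℝ) (c : Vec N) : Set (Fn N × Fn N) :=
  {p ∈ NehariT γ ω c | St γ ω c p.1 p.2 = muT γ ω c}

/-- `(φ, ψ)` is a critical point of `S̃_{ω,c}` (vanishing Gateaux derivative in all
H¹ directions). -/
def CritT {N : ℕ} (γ ω : ℝ) (c : Vec N) (φ ψ : Fn N) : Prop :=
  ∀ h k : Fn N, MemH1 h → MemH1 k →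
    HasDerivAt (fun t : ℝ => St γ ω c (φ + t • h) (ψ + t • k)) 0 0

def AT {N : ℕ} (γ ω : ℝ) (c : Vec N) : Set (Fn N × Fn N) :=
  {p | MemH1 p.1 ∧ MemH1 p.2 ∧ p ≠ 0 ∧ CritT γ ω c p.1 p.2}

def GT {N : ℕ} (γ ω : ℝ) (c : Vec N) : Set (Fn N × Fn N) :=
  {p ∈ AT γ ω c | ∀ q ∈ AT γ ω c, St γ ω c p.1 p.2 ≤ St γ ω c q.1 q.2}

/-- Gauged translation `τ̃_y`. -/
def tauT {N : ℕ} (γ : ℝ) (c : Vec N) (y : Vec N) (p : Fn N × Fn N) : Fn N × Fn N :=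
  (fun x => Complex.exp (-Complex.I * (((⟪c, x⟫ : ℝ)/2 : ℝ) : ℂ)) * p.1 (x - y),
   fun x => Complex.exp (-Complex.I * ((γ * (⟪c, x⟫ : ℝ)/2 : ℝ) : ℂ)) * p.2 (x - y))

/-- Real part of the `H¹` inner product. -/
def h1Inner {N : ℕ} (f g : Fn N) : ℝ :=
  reInner f g + ∫ x : Vec N, ∑ i, (pd i f x * (starRingEnd ℂ) (pd i g x)).re

/-- Weak convergence in `H¹`, expressed through pairings. -/
def WeakH1 {N : ℕ} (un : ℕ → Fn N) (u : Fn N) : Prop :=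
  ∀ g : Fn N, MemH1 g → Tendsto (fun n => h1Inner (un n) g) atTop (nhds (h1Inner u g))

def h1distSq {N : ℕ} (f g : Fn N) : ℝ := L2sq (f - g) + gradSq (f - g)

/-- Strong convergence in `H¹`. -/
def StrongH1 {N : ℕ} (un : ℕ → Fn N) (u : Fn N) : Prop :=
  Tendsto (fun n => h1distSq (un n) u) atTop (nhds 0)

/-- `(u, v)` is a global (classical, H¹) solution of the time-dependent system (NLS). -/
structure IsNLS {N : ℕ} (γ : ℝ) (u v : ℝ → Fn N) : Prop where
  regSpaceU : ∀ t, ContDiff ℝ 2 (u t)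
  regSpaceV : ∀ t, ContDiff ℝ 2 (v t)
  regTimeU : ∀ x, Differentiable ℝ (fun t => u t x)
  regTimeV : ∀ x, Differentiable ℝ (fun t => v t x)
  memU : ∀ t, MemH1 (u t)
  memV : ∀ t, MemH1 (v t)
  eq1 : ∀ t x, Complex.I * deriv (fun s => u s x) t + lap (u t) x
      + ((‖u t x‖ ^ 2 / 9 + 2 * ‖v t x‖ ^ 2 : ℝ) : ℂ) * u t x
      + (1/3) * ((starRingEnd ℂ) (u t x)) ^ 2 * v t x = 0
  eq2 : ∀ t x, Complex.I * (γ : ℂ) * deriv (fun s => v s x) t + lap (v t) x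
      + ((9 * ‖v t x‖ ^ 2 + 2 * ‖u t x‖ ^ 2 : ℝ) : ℂ) * v t x
      + (1/9) * (u t x) ^ 3 = 0

/-- Nonlinear part of the action for the elliptic system without the cubic coupling. -/
def DstarR {N : ℕ} (u v : FnR N) : ℝ :=
  ∫ x : Vec N, ((1 : ℝ)/36) * (u x) ^ 4 + (9/4) * (v x) ^ 4 + (u x) ^ 2 * (v x) ^ 2

def SstarR {N : ℕ} (γ : ℝ) (u v : FnR N) : ℝ :=
  (1/2) * (gradSqR u + gradSqR v) + (1/2) * L2sqR u + (3*γ/2) * L2sqR v - DstarR u v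

structure IsSolStar {N : ℕ} (γ : ℝ) (u v : FnR N) : Prop where
  regu : ContDiff ℝ 2 u
  regv : ContDiff ℝ 2 v
  memu : MemH1R u
  memv : MemH1R v
  eq1 : ∀ x, -lapR u x + u x = (1/9) * (u x) ^ 3 + 2 * (v x) ^ 2 * (u x)
  eq2 : ∀ x, -lapR v x + 3*γ*(v x) = 9 * (v x) ^ 3 + 2 * (u x) ^ 2 * (v x)

/-- `(Q*, P*)` : positive ground state of the uncoupled elliptic system. -/
def IsGSStar {N : ℕ} (γ : ℝ) (Q P : FnR N) : Prop :=
  IsSolStar γ Q P ∧ (∀ x, 0 < Q x) ∧ (∀ x, 0 < P x) ∧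
    ∀ u v : FnR N, IsSolStar γ u v → (u, v) ≠ 0 → SstarR γ Q P ≤ SstarR γ u v

def DfullR {N : ℕ} (u v : FnR N) : ℝ :=
  ∫ x : Vec N, ((1 : ℝ)/36) * (u x) ^ 4 + (9/4) * (v x) ^ 4 + (u x) ^ 2 * (v x) ^ 2
    + (1/9) * (u x) ^ 3 * (v x)

def SfullR {N : ℕ} (γ : ℝ) (u v : FnR N) : ℝ :=
  (1/2) * (gradSqR u + gradSqR v) + (1/2) * L2sqR u + (3*γ/2) * L2sqR v - DfullR u v

structure IsSolFull {N : ℕ} (γ : ℝ) (u v : FnR N) : Prop where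
  regu : ContDiff ℝ 2 u
  regv : ContDiff ℝ 2 v
  memu : MemH1R u
  memv : MemH1R v
  eq1 : ∀ x, -lapR u x + u x
      = (1/9) * (u x) ^ 3 + 2 * (v x) ^ 2 * (u x) + (1/3) * (u x) ^ 2 * (v x)
  eq2 : ∀ x, -lapR v x + 3*γ*(v x)
      = 9 * (v x) ^ 3 + 2 * (u x) ^ 2 * (v x) + (1/9) * (u x) ^ 3

/-- `(Q, P)` : positive ground state of the fully coupled elliptic system. -/
def IsGSFull {N : ℕ} (γ : ℝ) (Q P : FnR N) : Prop :=
  IsSolFull γ Q P ∧ (∀ x, 0 < Q x) ∧ (∀ x, 0 < P x) ∧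
    ∀ u v : FnR N, IsSolFull γ u v → (u, v) ≠ 0 → SfullR γ Q P ≤ SfullR γ u v

def SQfun {N : ℕ} (γ ω : ℝ) (u : FnR N) : ℝ :=
  (1/2) * gradSqR u + (3*γ*ω/2) * L2sqR u - (9/4) * ∫ x : Vec N, (u x) ^ 4

structure IsSolQ {N : ℕ} (γ ω : ℝ) (u : FnR N) : Prop where
  reg : ContDiff ℝ 2 u
  mem : MemH1R u
  eq : ∀ x, -lapR u x + 3*γ*ω*(u x) = 9 * (u x) ^ 3

/-- `Q` : positive ground state of `-ΔQ + 3γω Q = 9 Q³`. -/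
def IsGSQ {N : ℕ} (γ ω : ℝ) (Q : FnR N) : Prop :=
  IsSolQ γ ω Q ∧ (∀ x, 0 < Q x) ∧ ∀ u : FnR N, IsSolQ γ ω u → u ≠ 0 → SQfun γ ω Q ≤ SQfun γ ω u


namespace Stmt12

lemma fderiv_smul_eq {N : ℕ} (t : ℝ) (ht : t ≠ 0) (u : Fn N) (x : Vec N) :
    fderiv ℝ (fun y => t • u y) x = t • fderiv ℝ u x := by
  by_cases h : DifferentiableAt ℝ u x
  · exact fderiv_const_smul h t
  · have h2 : ¬ DifferentiableAt ℝ (fun y => t • u y) x := fun hd => h (by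
      have heq : u = fun y => t⁻¹ • (t • u y) := by
        funext y; rw [smul_smul, inv_mul_cancel₀ ht, one_smul]
      rw [heq]; exact hd.const_smul t⁻¹)
    rw [fderiv_zero_of_not_differentiableAt h, fderiv_zero_of_not_differentiableAt h2]
    exact (smul_zero (A := Vec N →L[ℝ] ℂ) t).symm

lemma pd_smul {N : ℕ} (t : ℝ) (ht : t ≠ 0) (u : Fn N) (i : Fin N) (x : Vec N) :
    pd i (fun y => t • u y) x = t • pd i u x := by
  unfold pd
  rw [fderiv_smul_eq t ht u x]; rfl

lemma gradSq_smul {N : ℕ} (t : ℝ) (ht : t ≠ 0) (u : Fn N) :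
    gradSq (fun y => t • u y) = t ^ 2 * gradSq u := by
  unfold gradSq
  rw [← integral_const_mul]
  congr 1; funext x
  rw [Finset.mul_sum]
  refine Finset.sum_congr rfl fun i _ => ?_
  rw [pd_smul t ht u i x, norm_smul]
  simp [mul_pow, sq_abs]

lemma L2sq_smul {N : ℕ} (t : ℝ) (u : Fn N) :
    L2sq (fun y => t • u y) = t ^ 2 * L2sq u := by
  unfold L2sq
  rw [← integral_const_mul]
  congr 1; funext x
  rw [norm_smul]
  simp [mul_pow, sq_abs]

lemma Qt_smul {N : ℕ} (γ ω t : ℝ) (ht : t ≠ 0) (c : Vec N) (u v : Fn N) :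
    Qt γ ω c (fun y => t • u y) (fun y => t • v y) = t ^ 2 * Qt γ ω c u v := by
  unfold Qt
  rw [gradSq_smul t ht u, gradSq_smul t ht v, L2sq_smul t u, L2sq_smul t v]
  ring

lemma Dt_smul {N : ℕ} (γ t : ℝ) (c : Vec N) (u v : Fn N) :
    Dt γ c (fun y => t • u y) (fun y => t • v y) = t ^ 4 * Dt γ c u v := by
  unfold Dt
  rw [← integral_const_mul]
  congr 1; funext x
  have h1 : ∀ z : ℂ, ‖t • z‖ ^ 2 = t ^ 2 * ‖z‖ ^ 2 := fun z => by
    rw [norm_smul]; simp [mul_pow, sq_abs]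
  have habs : |t| ^ 4 = t ^ 4 := by
    rw [← _root_.abs_pow]; exact abs_of_nonneg (by positivity)
  have h2 : ∀ z : ℂ, ‖t • z‖ ^ 4 = t ^ 4 * ‖z‖ ^ 4 := fun z => by
    rw [norm_smul, mul_pow, Real.norm_eq_abs, habs]
  have h3 : (Complex.exp (Complex.I * (((3 - γ)/2 * ⟪c, x⟫ : ℝ) : ℂ))
        * ((starRingEnd ℂ) (t • u x)) ^ 3 * (t • v x)).re
      = t ^ 4 * (Complex.exp (Complex.I * (((3 - γ)/2 * ⟪c, x⟫ : ℝ) : ℂ))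
        * ((starRingEnd ℂ) (u x)) ^ 3 * v x).re := by
    have : Complex.exp (Complex.I * (((3 - γ)/2 * ⟪c, x⟫ : ℝ) : ℂ))
        * ((starRingEnd ℂ) (t • u x)) ^ 3 * (t • v x)
        = ((t ^ 4 : ℝ) : ℂ) * (Complex.exp (Complex.I * (((3 - γ)/2 * ⟪c, x⟫ : ℝ) : ℂ))
        * ((starRingEnd ℂ) (u x)) ^ 3 * v x) := by
      simp only [Complex.real_smul, map_mul, Complex.conj_ofReal]
      push_cast
      ring
    rw [this, Complex.re_ofReal_mul]
  rw [h1, h1, h2, h2, h3]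
  ring

lemma memH1_smul {N : ℕ} (t : ℝ) (ht : t ≠ 0) {u : Fn N} (hu : MemH1 u) :
    MemH1 (fun y => t • u y) := by
  refine ⟨hu.1.const_smul t, ?_⟩
  have : (fun x : Vec N => fderiv ℝ (fun y => t • u y) x)
      = fun x => t • fderiv ℝ u x := funext fun x => fderiv_smul_eq t ht u x
  rw [this]
  exact hu.2.const_smul t

lemma ae_zero_of_L2sq {N : ℕ} {u : Fn N} (hu : MemLp u 2 (volume : Measure (Vec N)))
    (h : L2sq u = 0) : ∀ᵐ x : Vec N, u x = 0 := by
  have hint : Integrable (fun x : Vec N => ‖u x‖ ^ 2) volume := by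
    have := hu.integrable_norm_rpow (by norm_num) (by norm_num)
    simpa [ENNReal.toReal_ofNat, Real.rpow_natCast] using this
  have h0 := (integral_eq_zero_iff_of_nonneg (fun x => sq_nonneg _) hint).mp h
  filter_upwards [h0] with x hx
  have : ‖u x‖ ^ 2 = 0 := hx
  simpa using this

end Stmt12

set_option maxHeartbeats 1000000 in
/-- if `Ñ_{ω,c}(u,v) < 0`, then `(1/2)Q̃_{ω,c}(u,v) > μ̃_{ω,c}`. -/
theorem stmt_12 {N : ℕ} (hN1 : 1 ≤ N) (hN3 : N ≤ 3)
    (γ : ℝ) (hγ : 0 < γ) (hγ3 : γ ≠ 3) (c : Vec N) (ω : ℝ)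
    (hω : ω > max (‖c‖ ^ 2 / 4) (γ * ‖c‖ ^ 2 / 12))
    (u v : Fn N) (hu : MemH1 u) (hv : MemH1 v)
    (hNeg : Nt γ ω c u v < 0) :
    muT γ ω c < (1/2) * Qt γ ω c u v := by
  have h1 : ‖c‖ ^ 2 / 4 < ω := lt_of_le_of_lt (le_max_left _ _) hω
  have h2 : γ * ‖c‖ ^ 2 / 12 < ω := lt_of_le_of_lt (le_max_right _ _) hω
  have hc1 : 0 < ω - ‖c‖ ^ 2 / 4 := by linarith
  have hc2 : 0 < 3*γ*ω - γ ^ 2 * ‖c‖ ^ 2 / 4 := by nlinarith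
  have hQnn : ∀ a b : Fn N, 0 ≤ Qt γ ω c a b := by
    intro a b
    have g1 : 0 ≤ gradSq a :=
      integral_nonneg fun x => Finset.sum_nonneg fun i _ => sq_nonneg _
    have g2 : 0 ≤ gradSq b :=
      integral_nonneg fun x => Finset.sum_nonneg fun i _ => sq_nonneg _
    have l1 : 0 ≤ L2sq a := integral_nonneg fun x => sq_nonneg _
    have l2 : 0 ≤ L2sq b := integral_nonneg fun x => sq_nonneg _
    have m1 := mul_nonneg hc1.le l1
    have m2 := mul_nonneg hc2.le l2
    unfold Qt
    linarith
  have hbdd : BddBelow ((fun p : Fn N × Fn N => St γ ω c p.1 p.2) '' NehariT γ ω c) := by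
    refine ⟨0, fun s hs => ?_⟩
    obtain ⟨p, hp, rfl⟩ := hs
    have hN := hp.2.2.2
    have hq := hQnn p.1 p.2
    unfold Nt at hN
    show (0:ℝ) ≤ St γ ω c p.1 p.2
    unfold St
    linarith
  have hQpos : 0 < Qt γ ω c u v := by
    rcases lt_or_eq_of_le (hQnn u v) with h | h
    · exact h
    exfalso
    have g1 : 0 ≤ gradSq u :=
      integral_nonneg fun x => Finset.sum_nonneg fun i _ => sq_nonneg _
    have g2 : 0 ≤ gradSq v :=
      integral_nonneg fun x => Finset.sum_nonneg fun i _ => sq_nonneg _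
    have l1 : 0 ≤ L2sq u := integral_nonneg fun x => sq_nonneg _
    have l2 : 0 ≤ L2sq v := integral_nonneg fun x => sq_nonneg _
    have hq0 := h.symm
    unfold Qt at hq0
    have m1 := mul_nonneg hc1.le l1
    have m2 := mul_nonneg hc2.le l2
    have e1 : (ω - ‖c‖ ^ 2 / 4) * L2sq u = 0 := by nlinarith
    have e2 : (3*γ*ω - γ ^ 2 * ‖c‖ ^ 2 / 4) * L2sq v = 0 := by nlinarith
    have hLu : L2sq u = 0 := by
      rcases mul_eq_zero.mp e1 with h' | h'
      · linarith
      · exact h'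
    have hLv : L2sq v = 0 := by
      rcases mul_eq_zero.mp e2 with h' | h'
      · linarith
      · exact h'
    have hu0 := Stmt12.ae_zero_of_L2sq hu.1 hLu
    have hv0 := Stmt12.ae_zero_of_L2sq hv.1 hLv
    have hD0 : Dt γ c u v = 0 := by
      unfold Dt
      rw [show (0:ℝ) = ∫ _ : Vec N, (0:ℝ) from (integral_zero _ _).symm]
      apply integral_congr_ae
      filter_upwards [hu0, hv0] with x hx1 hx2
      simp [hx1, hx2]
    unfold Nt at hNeg
    rw [hD0, ← h] at hNeg
    norm_num at hNeg
  have hDpos : 0 < Dt γ c u v := by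
    unfold Nt at hNeg
    linarith
  set t : ℝ := Real.sqrt (Qt γ ω c u v / (2 * Dt γ c u v)) with htdef
  have htpos : 0 < t := Real.sqrt_pos.mpr (by positivity)
  have ht2 : t ^ 2 = Qt γ ω c u v / (2 * Dt γ c u v) := Real.sq_sqrt (by positivity)
  have hQeq : Qt γ ω c u v = t ^ 2 * (2 * Dt γ c u v) := by
    rw [ht2]; field_simp
  have hslt : t ^ 2 < 1 := by
    rw [ht2, div_lt_one (by positivity)]
    unfold Nt at hNeg
    linarith
  set p : Fn N × Fn N := (fun y => t • u y, fun y => t • v y) with hpdef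
  have hne : p ≠ 0 := by
    intro h0
    have hu0 : ∀ x, u x = 0 := by
      intro x
      have hx := congrFun (congrArg Prod.fst h0) x
      have : t • u x = 0 := hx
      rcases smul_eq_zero.mp this with h' | h'
      · exact absurd h' htpos.ne'
      · exact h'
    have hv0 : ∀ x, v x = 0 := by
      intro x
      have hx := congrFun (congrArg Prod.snd h0) x
      have : t • v x = 0 := hx
      rcases smul_eq_zero.mp this with h' | h'
      · exact absurd h' htpos.ne'
      · exact h'
    have hueq : u = fun _ => 0 := funext hu0
    have hveq : v = fun _ => 0 := funext hv0
    rw [hueq, hveq] at hQpos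
    have hz : Qt γ ω c (fun _ : Vec N => (0:ℂ)) (fun _ => 0) = 0 := by
      simp [Qt, gradSq, L2sq, pd]
    rw [hz] at hQpos
    exact lt_irrefl _ hQpos
  have hNt0 : Nt γ ω c p.1 p.2 = 0 := by
    show Nt γ ω c (fun y => t • u y) (fun y => t • v y) = 0
    unfold Nt
    rw [Stmt12.Qt_smul γ ω t htpos.ne' c u v, Stmt12.Dt_smul γ t c u v,
      show t ^ 4 = t ^ 2 * t ^ 2 from by ring]
    have arith : ∀ Q D s : ℝ, 0 < D → s = Q / (2*D) → 2*(s*Q) - 4*(s*s*D) = 0 := by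
      intro Q D s hD hs
      subst hs
      field_simp
      ring
    exact arith _ _ _ hDpos ht2
  have hmem : p ∈ NehariT γ ω c :=
    ⟨Stmt12.memH1_smul t htpos.ne' hu, Stmt12.memH1_smul t htpos.ne' hv, hne, hNt0⟩
  have hle : muT γ ω c ≤ St γ ω c p.1 p.2 :=
    csInf_le hbdd ⟨p, hmem, rfl⟩
  have hSt : St γ ω c p.1 p.2
      = t ^ 2 * Qt γ ω c u v - t ^ 2 * t ^ 2 * Dt γ c u v := by
    show St γ ω c (fun y => t • u y) (fun y => t • v y) = _
    unfold St
    rw [Stmt12.Qt_smul γ ω t htpos.ne' c u v, Stmt12.Dt_smul γ t c u v]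
    ring
  have hkey : t ^ 2 * Qt γ ω c u v - t ^ 2 * t ^ 2 * Dt γ c u v
      < (1/2) * Qt γ ω c u v := by
    nlinarith [mul_pos (mul_pos (mul_pos htpos htpos) hDpos) (sub_pos.mpr hslt),
      sq_nonneg t, hDpos, hQpos]
  calc muT γ ω c ≤ St γ ω c p.1 p.2 := hle
    _ = _ := hSt
    _ < (1/2) * Qt γ ω c u v := hkey



end
end

section
/- Let 1 ≤ N ≤ 3, γ > 0, and let (ω, c) ∈ ℝ×ℝ^N satisfy ω > 0 and c ≠ 0 (with ω > max{|c|²/4, γ|c|²/12} so that the Nehari levels are defined). Then the Nehari level satisfies the scaling relation μ_{ω,c} = |c|^{4−N} · μ_{ω/|c|², c/|c|}. -/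
open MeasureTheory Complex Filter
open scoped RealInnerProductSpace

noncomputable section

/-- Scaling map used for the Nehari level scaling relation. -/
def Sc {N : ℕ} (r : ℝ) (u : Fn N) : Fn N := fun x => (r : ℂ) * u (r • x)

lemma Sc_Sc {N : ℕ} {r : ℝ} (hr : r ≠ 0) (u : Fn N) : Sc r⁻¹ (Sc r u) = u := by
  funext x
  simp only [Sc, smul_smul, mul_inv_cancel₀ hr, one_smul, ← mul_assoc, ← Complex.ofReal_mul,
    inv_mul_cancel₀ hr, Complex.ofReal_one, one_mul]

lemma hasFDerivAt_Sc {N : ℕ} (r : ℝ) (u : Fn N) {x : Vec N}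
    (h : DifferentiableAt ℝ u (r • x)) :
    HasFDerivAt (Sc r u) ((r ^ 2 : ℝ) • fderiv ℝ u (r • x)) x := by
  have h1 : HasFDerivAt (fun y : Vec N => r • y) (r • ContinuousLinearMap.id ℝ (Vec N)) x :=
    (hasFDerivAt_id x).const_smul r
  have h3 := (h.hasFDerivAt.comp x h1).const_smul (r : ℂ)
  refine h3.congr_fderiv ?_
  ext v
  simp only [ContinuousLinearMap.smul_apply, ContinuousLinearMap.coe_comp',
    Function.comp_apply, ContinuousLinearMap.coe_smul', Pi.smul_apply,
    ContinuousLinearMap.coe_id', id_eq]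
  rw [(fderiv ℝ u (r • x)).map_smul, Complex.real_smul, Complex.real_smul, smul_eq_mul]
  push_cast; ring

lemma differentiableAt_Sc {N : ℕ} {r : ℝ} (hr : r ≠ 0) (u : Fn N) (x : Vec N) :
    DifferentiableAt ℝ (Sc r u) x ↔ DifferentiableAt ℝ u (r • x) := by
  constructor
  · intro h
    have h2 : DifferentiableAt ℝ (Sc r⁻¹ (Sc r u)) (r • x) := by
      refine (hasFDerivAt_Sc r⁻¹ (Sc r u) ?_).differentiableAt
      rwa [smul_smul, inv_mul_cancel₀ hr, one_smul]
    rwa [Sc_Sc hr u] at h2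
  · exact fun h => (hasFDerivAt_Sc r u h).differentiableAt

lemma fderiv_Sc {N : ℕ} {r : ℝ} (hr : r ≠ 0) (u : Fn N) (x : Vec N) :
    fderiv ℝ (Sc r u) x = (r ^ 2 : ℝ) • fderiv ℝ u (r • x) := by
  by_cases h : DifferentiableAt ℝ u (r • x)
  · exact (hasFDerivAt_Sc r u h).fderiv
  · rw [fderiv_zero_of_not_differentiableAt h,
      fderiv_zero_of_not_differentiableAt (fun h2 => h ((differentiableAt_Sc hr u x).1 h2))]
    exact (smul_zero (A := Vec N →L[ℝ] ℂ) (r ^ 2 : ℝ)).symm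

lemma pd_Sc {N : ℕ} {r : ℝ} (hr : r ≠ 0) (u : Fn N) (i : Fin N) (x : Vec N) :
    pd i (Sc r u) x = ((r ^ 2 : ℝ) : ℂ) * pd i u (r • x) := by
  unfold pd
  rw [fderiv_Sc hr]
  simp [Complex.real_smul]

lemma memLp_comp_smul {N : ℕ} {E : Type*} [NormedAddCommGroup E] {r : ℝ} (hr : r ≠ 0)
    {f : Vec N → E} (h : MemLp f 2 (volume : Measure (Vec N))) :
    MemLp (fun x => f (r • x)) 2 (volume : Measure (Vec N)) := by
  have hmap := Measure.map_addHaar_smul (μ := (volume : Measure (Vec N))) hr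
  have h2 : MemLp f 2 (Measure.map (r • ·) (volume : Measure (Vec N))) := by
    rw [hmap]; exact h.smul_measure ENNReal.ofReal_ne_top
  exact
    (memLp_map_measure_iff h2.1 (measurable_const_smul r).aemeasurable).1 h2

lemma memH1_Sc {N : ℕ} {r : ℝ} (hr : r ≠ 0) {u : Fn N} (h : MemH1 u) : MemH1 (Sc r u) := by
  obtain ⟨h1, h2⟩ := h
  constructor
  · exact (memLp_comp_smul hr h1).const_mul (r : ℂ)
  · have e : (fun x => fderiv ℝ (Sc r u) x) = fun x => (r ^ 2 : ℝ) • fderiv ℝ u (r • x) :=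
      funext (fderiv_Sc hr u)
    rw [e]
    exact MemLp.const_smul (memLp_comp_smul hr h2) ((r : ℝ) ^ 2)

lemma integral_scale {N : ℕ} {r : ℝ} (hr : 0 < r) (g : Vec N → ℝ) :
    ∫ x : Vec N, g (r • x) = (r ^ N)⁻¹ * ∫ x : Vec N, g x := by
  rw [Measure.integral_comp_smul volume g r, finrank_euclideanSpace_fin, smul_eq_mul,
    abs_of_pos (by positivity)]

lemma L2sq_Sc {N : ℕ} {r : ℝ} (hr : 0 < r) (u : Fn N) :
    L2sq (Sc r u) = r ^ 2 * ((r ^ N)⁻¹ * L2sq u) := by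
  unfold L2sq
  have e : ∀ x : Vec N, ‖Sc r u x‖ ^ 2 = r ^ 2 * ‖u (r • x)‖ ^ 2 := by
    intro x
    simp only [Sc, norm_mul, Complex.norm_real, Real.norm_eq_abs, abs_of_pos hr, mul_pow]
  simp_rw [e]
  rw [integral_const_mul _ _, integral_scale hr (fun y => ‖u y‖ ^ 2)]

lemma gradSq_Sc {N : ℕ} {r : ℝ} (hr : 0 < r) (u : Fn N) :
    gradSq (Sc r u) = r ^ 4 * ((r ^ N)⁻¹ * gradSq u) := by
  unfold gradSq
  have e : ∀ x : Vec N, ∑ i, ‖pd i (Sc r u) x‖ ^ 2 = r ^ 4 * ∑ i, ‖pd i u (r • x)‖ ^ 2 := by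
    intro x
    rw [Finset.mul_sum]
    refine Finset.sum_congr rfl fun i _ => ?_
    rw [pd_Sc hr.ne' u i x, norm_mul, mul_pow, Complex.norm_real, Real.norm_eq_abs,
      abs_of_pos (by positivity), ← pow_mul]
  simp_rw [e]
  rw [integral_const_mul _ _, integral_scale hr (fun y => ∑ i, ‖pd i u y‖ ^ 2)]

lemma mom_Sc {N : ℕ} {r : ℝ} (hr : 0 < r) (u : Fn N) (i : Fin N) :
    (∫ x : Vec N, (Complex.I * pd i (Sc r u) x * (starRingEnd ℂ) (Sc r u x)).re)
      = r ^ 3 * ((r ^ N)⁻¹ * ∫ x : Vec N, (Complex.I * pd i u x * (starRingEnd ℂ) (u x)).re) := by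
  have e : ∀ x : Vec N, (Complex.I * pd i (Sc r u) x * (starRingEnd ℂ) (Sc r u x)).re
      = r ^ 3 * (Complex.I * pd i u (r • x) * (starRingEnd ℂ) (u (r • x))).re := by
    intro x
    rw [pd_Sc hr.ne' u i x]
    have e2 : Complex.I * (((r ^ 2 : ℝ) : ℂ) * pd i u (r • x)) * (starRingEnd ℂ) (Sc r u x)
        = ((r ^ 3 : ℝ) : ℂ) * (Complex.I * pd i u (r • x) * (starRingEnd ℂ) (u (r • x))) := by
      simp only [Sc, map_mul, Complex.conj_ofReal]
      push_cast; ring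
    rw [e2, Complex.re_ofReal_mul]
  simp_rw [e]
  rw [integral_const_mul _ _,
    integral_scale hr (fun y => (Complex.I * pd i u y * (starRingEnd ℂ) (u y)).re)]

lemma Dfun_Sc {N : ℕ} {r : ℝ} (hr : 0 < r) (u v : Fn N) :
    Dfun (Sc r u) (Sc r v) = r ^ 4 * ((r ^ N)⁻¹ * Dfun u v) := by
  unfold Dfun
  have e : ∀ x : Vec N,
      ((1 : ℝ)/36) * ‖Sc r u x‖ ^ 4 + (9/4) * ‖Sc r v x‖ ^ 4
        + ‖Sc r u x‖ ^ 2 * ‖Sc r v x‖ ^ 2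
        + (1/9) * (((starRingEnd ℂ) (Sc r u x)) ^ 3 * Sc r v x).re
      = r ^ 4 * (((1 : ℝ)/36) * ‖u (r • x)‖ ^ 4 + (9/4) * ‖v (r • x)‖ ^ 4
        + ‖u (r • x)‖ ^ 2 * ‖v (r • x)‖ ^ 2
        + (1/9) * (((starRingEnd ℂ) (u (r • x))) ^ 3 * v (r • x)).re) := by
    intro x
    have hu : ‖Sc r u x‖ = r * ‖u (r • x)‖ := by
      simp [Sc, Complex.norm_real, Real.norm_eq_abs, abs_of_pos hr]
    have hv : ‖Sc r v x‖ = r * ‖v (r • x)‖ := by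
      simp [Sc, Complex.norm_real, Real.norm_eq_abs, abs_of_pos hr]
    have hre : (((starRingEnd ℂ) (Sc r u x)) ^ 3 * Sc r v x).re
        = r ^ 4 * (((starRingEnd ℂ) (u (r • x))) ^ 3 * v (r • x)).re := by
      have e3 : ((starRingEnd ℂ) (Sc r u x)) ^ 3 * Sc r v x
          = ((r ^ 4 : ℝ) : ℂ) * (((starRingEnd ℂ) (u (r • x))) ^ 3 * v (r • x)) := by
        simp only [Sc, map_mul, Complex.conj_ofReal]
        push_cast; ring
      rw [e3, Complex.re_ofReal_mul]
    rw [hu, hv, hre]; ring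
  simp_rw [e]
  rw [integral_const_mul _ _, integral_scale hr (fun y => ((1 : ℝ)/36) * ‖u y‖ ^ 4
    + (9/4) * ‖v y‖ ^ 4 + ‖u y‖ ^ 2 * ‖v y‖ ^ 2
    + (1/9) * (((starRingEnd ℂ) (u y)) ^ 3 * v y).re)]

lemma cdotP_Sc {N : ℕ} {r : ℝ} (hr : 0 < r) (γ : ℝ) (c : Vec N) (u v : Fn N) :
    cdotP γ (r • c) (Sc r u) (Sc r v) = r ^ 4 * ((r ^ N)⁻¹ * cdotP γ c u v) := by
  unfold cdotP
  rw [Finset.mul_sum, Finset.mul_sum]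
  refine Finset.sum_congr rfl fun i _ => ?_
  rw [mom_Sc hr u i, mom_Sc hr v i]
  have e : (r • c) i = r * c i := rfl
  rw [e]; ring

lemma Qfun_Sc {N : ℕ} {r : ℝ} (hr : 0 < r) (γ ω : ℝ) (c : Vec N) (u v : Fn N) :
    Qfun γ (r ^ 2 * ω) (r • c) (Sc r u) (Sc r v) = r ^ 4 * ((r ^ N)⁻¹ * Qfun γ ω c u v) := by
  unfold Qfun
  rw [gradSq_Sc hr u, gradSq_Sc hr v, L2sq_Sc hr u, L2sq_Sc hr v, cdotP_Sc hr γ c u v]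
  ring

lemma Sfun_Sc {N : ℕ} {r : ℝ} (hr : 0 < r) (γ ω : ℝ) (c : Vec N) (u v : Fn N) :
    Sfun γ (r ^ 2 * ω) (r • c) (Sc r u) (Sc r v) = r ^ 4 * ((r ^ N)⁻¹ * Sfun γ ω c u v) := by
  unfold Sfun
  rw [Qfun_Sc hr γ ω c u v, Dfun_Sc hr u v]; ring

lemma Nfun_Sc {N : ℕ} {r : ℝ} (hr : 0 < r) (γ ω : ℝ) (c : Vec N) (u v : Fn N) :
    Nfun γ (r ^ 2 * ω) (r • c) (Sc r u) (Sc r v) = r ^ 4 * ((r ^ N)⁻¹ * Nfun γ ω c u v) := by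
  unfold Nfun
  rw [Qfun_Sc hr γ ω c u v, Dfun_Sc hr u v]; ring

lemma Sc_eq_zero {N : ℕ} {r : ℝ} (hr : r ≠ 0) {u : Fn N} (h : Sc r u = 0) : u = 0 := by
  have h2 := congrArg (Sc r⁻¹) h
  rw [Sc_Sc hr u] at h2
  rw [h2]
  funext x
  simp [Sc]

open scoped Pointwise in
lemma sInf_mul_image (K : ℝ) (hK : 0 ≤ K) (A : Set ℝ) :
    sInf ((fun s => K * s) '' A) = K * sInf A := by
  have e : (fun s => K * s) '' A = K • A := by
    ext y; simp [Set.mem_smul_set, smul_eq_mul]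
  rw [e, Real.sInf_smul_of_nonneg hK, smul_eq_mul]

lemma nehari_Sc {N : ℕ} {r : ℝ} (hr : 0 < r) (γ ω : ℝ) (c : Vec N) {p : Fn N × Fn N}
    (hp : p ∈ NehariSet γ ω c) :
    (Sc r p.1, Sc r p.2) ∈ NehariSet γ (r ^ 2 * ω) (r • c) := by
  obtain ⟨h1, h2, h3, h4⟩ := hp
  refine ⟨memH1_Sc hr.ne' h1, memH1_Sc hr.ne' h2, ?_, ?_⟩
  · intro h
    apply h3
    have e1 : Sc r p.1 = 0 := congrArg Prod.fst h
    have e2 : Sc r p.2 = 0 := congrArg Prod.snd h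
    exact Prod.ext_iff.2 ⟨Sc_eq_zero hr.ne' e1, Sc_eq_zero hr.ne' e2⟩
  · rw [Nfun_Sc hr γ ω c p.1 p.2, h4, mul_zero, mul_zero]


/-- the scaling relation `μ_{ω,c} = |c|^{4−N} μ_{ω/|c|², c/|c|}` for
the Nehari level. -/
theorem stmt_17 {N : ℕ} (hN1 : 1 ≤ N) (hN3 : N ≤ 3)
    (γ : ℝ) (hγ : 0 < γ) (ω : ℝ) (c : Vec N) (hω0 : 0 < ω) (hc : c ≠ 0)
    (hω : ω > max (‖c‖ ^ 2 / 4) (γ * ‖c‖ ^ 2 / 12)) :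
    mu γ ω c = ‖c‖ ^ ((4 : ℝ) - (N : ℝ)) * mu γ (ω / ‖c‖ ^ 2) (‖c‖⁻¹ • c) := by
  set L := ‖c‖ with hLdef
  have hL0 : 0 < L := norm_pos_iff.2 hc
  have hLN : (0:ℝ) < L ^ N := by positivity
  set K := L ^ N / L ^ 4 with hKdef
  have hK0 : 0 < K := by positivity
  have hparam1 : (L⁻¹) ^ 2 * ω = ω / L ^ 2 := by
    field_simp
  have hparam2 : L ^ 2 * (ω / L ^ 2) = ω := by
    field_simp
  have hparam3 : L • (L⁻¹ • c) = c := by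
    rw [smul_smul, mul_inv_cancel₀ hL0.ne', one_smul]
  have hset : ((fun p : Fn N × Fn N => Sfun γ (ω / L ^ 2) (L⁻¹ • c) p.1 p.2) ''
        NehariSet γ (ω / L ^ 2) (L⁻¹ • c))
      = (fun s => K * s) '' ((fun p : Fn N × Fn N => Sfun γ ω c p.1 p.2) ''
        NehariSet γ ω c) := by
    ext s
    constructor
    · rintro ⟨p, hp, rfl⟩
      have hmem := nehari_Sc hL0 γ (ω / L ^ 2) (L⁻¹ • c) hp
      rw [hparam2, hparam3] at hmem
      refine ⟨Sfun γ ω c (Sc L p.1) (Sc L p.2), ⟨(Sc L p.1, Sc L p.2), hmem, rfl⟩, ?_⟩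
      have hs := Sfun_Sc hL0 γ (ω / L ^ 2) (L⁻¹ • c) p.1 p.2
      rw [hparam2, hparam3] at hs
      rw [hs, hKdef]
      field_simp
    · rintro ⟨s₀, ⟨p, hp, rfl⟩, rfl⟩
      have hmem := nehari_Sc (inv_pos.2 hL0) γ ω c hp
      rw [hparam1] at hmem
      refine ⟨(Sc L⁻¹ p.1, Sc L⁻¹ p.2), hmem, ?_⟩
      show Sfun γ (ω / L ^ 2) (L⁻¹ • c) (Sc L⁻¹ p.1) (Sc L⁻¹ p.2) = K * Sfun γ ω c p.1 p.2
      have hs := Sfun_Sc (inv_pos.2 hL0) γ ω c p.1 p.2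
      rw [hparam1] at hs
      rw [hs, hKdef]
      rw [inv_pow, inv_pow, inv_inv]
      field_simp
  have hmu2 : mu γ (ω / L ^ 2) (L⁻¹ • c) = K * mu γ ω c := by
    unfold mu
    rw [hset]
    rw [sInf_mul_image K hK0.le]
  rw [hmu2, ← mul_assoc]
  have h4 : L ^ ((4:ℝ) - (N:ℝ)) * K = 1 := by
    rw [Real.rpow_sub hL0, show (4:ℝ) = ((4:ℕ):ℝ) by norm_num, Real.rpow_natCast,
      Real.rpow_natCast, hKdef]
    field_simp
  rw [h4, one_mul]

end
end
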